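/- For every v ∈ (0,1) and every integer k ≥ 3, ∫_{−4}^{60} (x² + 2(x+4)v²)^{−k/4} · (x+4)^{−1/2} dx ≤ 12 · v^{1−k/2}. -/
import Mathlib

open MeasureTheory Set

/-- Tail integral bound: for `p ≤ -3/4` and `0 < a ≤ b`,
`∫_a^b (x²)^p dx ≤ 2 a^{2p+1}`. -/
private lemma Jk_tail_bound (p a b : ℝ) (hp : p ≤ -(3:ℝ)/4) (ha : 0 < a) (hab : a ≤ b) :
    (∫ x in a..b, ((x:ℝ)^2) ^ p) ≤ 2 * a ^ (2*p + 1) := by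
  have h0 : (0:ℝ) ∉ Set.uIcc a b := by
    rw [Set.uIcc_of_le hab]
    rintro ⟨h1, h2⟩
    linarith
  have hcongr : (∫ x in a..b, ((x:ℝ)^2) ^ p) = ∫ x in a..b, x ^ (2*p) := by
    apply intervalIntegral.integral_congr
    intro x hx
    rw [Set.uIcc_of_le hab] at hx
    have hx0 : (0:ℝ) < x := lt_of_lt_of_le ha hx.1
    show ((x:ℝ)^2) ^ p = x ^ (2*p)
    rw [← Real.rpow_natCast x 2, ← Real.rpow_mul hx0.le]
    norm_num
  rw [hcongr, integral_rpow (Or.inr ⟨by intro h; linarith, h0⟩)]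
  have hbs : 0 ≤ b ^ (2*p+1) := Real.rpow_nonneg (by linarith) _
  have has : 0 ≤ a ^ (2*p+1) := Real.rpow_nonneg ha.le _
  rw [div_le_iff_of_neg (by linarith : 2*p+1 < 0)]
  nlinarith [mul_nonneg has (by linarith : (0:ℝ) ≤ -(2*(2*p+1)+1))]

set_option maxHeartbeats 1000000 in
/-- For every `v ∈ (0,1)` and every integer `k ≥ 3`,
`∫_{−4}^{60} (x² + 2(x+4)v²)^{−k/4}(x+4)^{−1/2} dx ≤ 12·v^{1−k/2}`. -/
theorem Jk_bound (v : ℝ) (hv : v ∈ Set.Ioo (0 : ℝ) 1) (k : ℕ) (hk : 3 ≤ k) :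
    (∫ x in (-4 : ℝ)..60,
        (x ^ 2 + 2 * (x + 4) * v ^ 2) ^ (-(k : ℝ) / 4) * (x + 4) ^ (-(1 / 2) : ℝ))
      ≤ 12 * v ^ ((1 : ℝ) - (k : ℝ) / 2) := by
  obtain ⟨hv0, hv1⟩ := hv
  have hk3 : (3:ℝ) ≤ (k:ℝ) := by exact_mod_cast hk
  set p : ℝ := -(k:ℝ)/4 with hpdef
  have hp : p ≤ -(3:ℝ)/4 := by rw [hpdef]; linarith
  have hp0 : p ≤ 0 := by linarith
  set f : ℝ → ℝ := fun x => (x ^ 2 + 2 * (x + 4) * v ^ 2) ^ p * (x + 4) ^ (-(1 / 2) : ℝ)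
    with hfdef
  -- positivity of the base
  have hbase : ∀ x : ℝ, -4 ≤ x → 0 < x ^ 2 + 2 * (x + 4) * v ^ 2 := by
    intro x hx
    rcases eq_or_ne x 0 with rfl | hne
    · norm_num; positivity
    · have h1 : 0 < x ^ 2 := by positivity
      have h2 : 0 ≤ 2 * (x + 4) * v ^ 2 := by
        have hx4 : (0:ℝ) ≤ x + 4 := by linarith
        positivity
      linarith
  have hmeas : Measurable f := by
    rw [hfdef]; fun_prop
  -- integrability on [-4, -2] by comparison with (x+4)^(-1/2)
  have hg1 : IntervalIntegrable (fun x : ℝ => (x + 4) ^ (-(1/2) : ℝ)) volume (-4) (-2) := by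
    have h := (intervalIntegral.intervalIntegrable_rpow' (a := 0) (b := 2)
      (r := -(1/2)) (by norm_num)).comp_add_right 4
    norm_num at h
    exact h
  have I1 : IntervalIntegrable f volume (-4) (-2) := by
    apply hg1.mono_fun hmeas.aestronglyMeasurable
    filter_upwards [ae_restrict_mem measurableSet_uIoc] with x hx
    rw [Set.uIoc_of_le (by norm_num : (-4:ℝ) ≤ -2)] at hx
    obtain ⟨hxa, hxb⟩ := hx
    have hx4 : (0:ℝ) < x + 4 := by linarith
    have hb := hbase x (by linarith)
    have h1 : (x ^ 2 + 2 * (x + 4) * v ^ 2) ^ p ≤ 1 := by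
      apply Real.rpow_le_one_of_one_le_of_nonpos _ hp0
      have h2' : 0 ≤ 2 * (x + 4) * v ^ 2 := by positivity
      nlinarith [sq_nonneg (x + 2)]
    have h2 : (0:ℝ) ≤ (x + 4) ^ (-(1/2) : ℝ) := Real.rpow_nonneg hx4.le _
    simp only [hfdef, Real.norm_eq_abs]
    rw [abs_of_nonneg (mul_nonneg (Real.rpow_nonneg hb.le _) h2), abs_of_nonneg h2]
    calc (x ^ 2 + 2 * (x + 4) * v ^ 2) ^ p * (x + 4) ^ (-(1/2) : ℝ)
        ≤ 1 * (x + 4) ^ (-(1/2) : ℝ) := mul_le_mul_of_nonneg_right h1 h2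
      _ = (x + 4) ^ (-(1/2) : ℝ) := one_mul _
  -- continuity/integrability on [-2, 60]
  have hcont : ContinuousOn f (Set.Icc (-2:ℝ) 60) := by
    rw [hfdef]
    apply ContinuousOn.mul
    · apply ContinuousOn.rpow_const (by fun_prop)
      intro x hx
      exact Or.inl (hbase x (by linarith [hx.1])).ne'
    · apply ContinuousOn.rpow_const (by fun_prop)
      intro x hx
      have : (0:ℝ) < x + 4 := by linarith [hx.1]
      exact Or.inl this.ne'
  have hsub : ∀ a b : ℝ, -2 ≤ a → b ≤ 60 → a ≤ b → IntervalIntegrable f volume a b := by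
    intro a b ha hb hab
    exact (hcont.mono (by rw [Set.uIcc_of_le hab]; exact Set.Icc_subset_Icc ha hb)).intervalIntegrable
  have I2 : IntervalIntegrable f volume (-2) (-v) := hsub _ _ le_rfl (by linarith) (by linarith)
  have I3 : IntervalIntegrable f volume (-v) v := hsub _ _ (by linarith) (by linarith) (by linarith)
  have I4 : IntervalIntegrable f volume v 60 := hsub _ _ (by linarith) le_rfl (by linarith)
  -- splitting
  have hsplit : (∫ x in (-4:ℝ)..60, f x)
      = (∫ x in (-4:ℝ)..(-2), f x) + ((∫ x in (-2:ℝ)..(-v), f x)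
          + ((∫ x in (-v:ℝ)..v, f x) + (∫ x in v..(60:ℝ), f x))) := by
    rw [intervalIntegral.integral_add_adjacent_intervals I3 I4,
        intervalIntegral.integral_add_adjacent_intervals I2 (I3.trans I4),
        intervalIntegral.integral_add_adjacent_intervals I1 (I2.trans (I3.trans I4))]
  set V : ℝ := v ^ ((1:ℝ) - (k:ℝ)/2) with hVdef
  have hV1 : (1:ℝ) ≤ V :=
    Real.one_le_rpow_of_pos_of_le_one_of_nonpos hv0 hv1.le (by linarith)
  have hexp : 2*p + 1 = (1:ℝ) - (k:ℝ)/2 := by rw [hpdef]; ring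
  -- piece A
  have hA : (∫ x in (-4:ℝ)..(-2), f x) ≤ 4 := by
    have hmono : (∫ x in (-4:ℝ)..(-2), f x) ≤ ∫ x in (-4:ℝ)..(-2), (x + 4) ^ (-(1/2):ℝ) := by
      apply intervalIntegral.integral_mono_on (by norm_num) I1 hg1
      intro x hx
      obtain ⟨hx1, hx2⟩ := hx
      have hx4 : (0:ℝ) ≤ x + 4 := by linarith
      have hb := hbase x (by linarith)
      have h1 : (x ^ 2 + 2 * (x + 4) * v ^ 2) ^ p ≤ 1 := by
        apply Real.rpow_le_one_of_one_le_of_nonpos _ hp0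
        have h2' : 0 ≤ 2 * (x + 4) * v ^ 2 := by positivity
        nlinarith [sq_nonneg (x + 2)]
      have h2 : (0:ℝ) ≤ (x + 4) ^ (-(1/2) : ℝ) := Real.rpow_nonneg hx4 _
      calc f x ≤ 1 * (x + 4) ^ (-(1/2) : ℝ) := mul_le_mul_of_nonneg_right h1 h2
        _ = (x + 4) ^ (-(1/2) : ℝ) := one_mul _
    have hval : (∫ x in (-4:ℝ)..(-2), (x + 4) ^ (-(1/2):ℝ))
        = ((2:ℝ) ^ ((1:ℝ)/2) - 0) / (1/2) := by
      rw [show (∫ x in (-4:ℝ)..(-2), (x + 4) ^ (-(1/2):ℝ))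
            = ∫ x in (0:ℝ)..2, x ^ (-(1/2):ℝ) by
          rw [intervalIntegral.integral_comp_add_right (fun x => x ^ (-(1/2):ℝ)) 4]
          norm_num]
      rw [integral_rpow (Or.inl (by norm_num))]
      norm_num [Real.zero_rpow]
    have h12 : ((2:ℝ) ^ ((1:ℝ)/2)) ≤ 2 := by
      calc ((2:ℝ) ^ ((1:ℝ)/2)) ≤ (2:ℝ) ^ (1:ℝ) :=
            Real.rpow_le_rpow_of_exponent_le (by norm_num) (by norm_num)
        _ = 2 := Real.rpow_one 2
    rw [hval] at hmono
    linarith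
  -- piece B
  have hB : (∫ x in (-2:ℝ)..(-v), f x) ≤ 2 * V := by
    have hg2 : IntervalIntegrable (fun x : ℝ => ((x:ℝ)^2) ^ p) volume (-2) (-v) := by
      apply ContinuousOn.intervalIntegrable
      apply ContinuousOn.rpow_const (by fun_prop)
      intro x hx
      rw [Set.uIcc_of_le (by linarith)] at hx
      have hxneg : x < 0 := lt_of_le_of_lt hx.2 (by linarith)
      exact Or.inl (pow_ne_zero 2 hxneg.ne)
    have hmono : (∫ x in (-2:ℝ)..(-v), f x) ≤ ∫ x in (-2:ℝ)..(-v), ((x:ℝ)^2) ^ p := by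
      apply intervalIntegral.integral_mono_on (by linarith) I2 hg2
      intro x hx
      obtain ⟨hx1, hx2⟩ := hx
      have hb := hbase x (by linarith)
      have hx2' : (0:ℝ) < x^2 := by nlinarith [sq_nonneg (x + v), mul_pos hv0 hv0]
      have h1 : (x ^ 2 + 2 * (x + 4) * v ^ 2) ^ p ≤ (x^2) ^ p := by
        apply Real.rpow_le_rpow_of_nonpos hx2' _ hp0
        have h2' : 0 ≤ 2 * (x + 4) * v ^ 2 := by
          have : (0:ℝ) ≤ x + 4 := by linarith
          positivity
        linarith
      have h2 : (x + 4) ^ (-(1/2):ℝ) ≤ 1 :=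
        Real.rpow_le_one_of_one_le_of_nonpos (by linarith) (by norm_num)
      calc f x ≤ (x^2) ^ p * 1 :=
            mul_le_mul h1 h2 (Real.rpow_nonneg (by linarith) _) (Real.rpow_nonneg hx2'.le _)
        _ = (x^2) ^ p := mul_one _
    have hneg : (∫ x in (-2:ℝ)..(-v), ((x:ℝ)^2) ^ p) = ∫ x in v..(2:ℝ), ((x:ℝ)^2) ^ p := by
      have h := intervalIntegral.integral_comp_neg (a := (-2:ℝ)) (b := -v)
        (fun x => ((x:ℝ)^2) ^ p)
      simp only [neg_neg, neg_sq] at h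
      exact h
    have htail := Jk_tail_bound p v 2 hp hv0 (by linarith)
    rw [hexp] at htail
    rw [hneg] at hmono
    linarith
  -- piece C
  have hC : (∫ x in (-v:ℝ)..v, f x) ≤ 2 * V := by
    have hmono : (∫ x in (-v:ℝ)..v, f x) ≤ ∫ _x in (-v:ℝ)..v, ((4:ℝ)*v^2) ^ p := by
      apply intervalIntegral.integral_mono_on (by linarith) I3 intervalIntegrable_const
      intro x hx
      obtain ⟨hx1, hx2⟩ := hx
      have hb := hbase x (by linarith)
      have h4v : (0:ℝ) < 4 * v^2 := by positivity
      have h1 : (x ^ 2 + 2 * (x + 4) * v ^ 2) ^ p ≤ ((4:ℝ)*v^2) ^ p := by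
        apply Real.rpow_le_rpow_of_nonpos h4v _ hp0
        nlinarith [sq_nonneg x, mul_nonneg (by linarith : (0:ℝ) ≤ x + 2) (sq_nonneg v)]
      have h2 : (x + 4) ^ (-(1/2):ℝ) ≤ 1 :=
        Real.rpow_le_one_of_one_le_of_nonpos (by linarith) (by norm_num)
      calc f x ≤ ((4:ℝ)*v^2) ^ p * 1 :=
            mul_le_mul h1 h2 (Real.rpow_nonneg (by linarith) _) (Real.rpow_nonneg h4v.le _)
        _ = ((4:ℝ)*v^2) ^ p := mul_one _
    rw [intervalIntegral.integral_const, smul_eq_mul] at hmono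
    have h4v' : ((4:ℝ)*v^2) ^ p ≤ (v^2) ^ p :=
      Real.rpow_le_rpow_of_nonpos (by positivity) (by nlinarith [sq_nonneg v]) hp0
    have hv2p : ((v:ℝ)^2) ^ p = v ^ (2*p) := by
      rw [← Real.rpow_natCast v 2, ← Real.rpow_mul hv0.le]
      norm_num
    have hvv : v * v ^ (2*p) = v ^ (2*p+1) := by
      rw [Real.rpow_add hv0, Real.rpow_one]; ring
    have hVv : v ^ (2*p+1) = V := by rw [hVdef, hexp]
    have step : (v - -v) * ((4:ℝ)*v^2) ^ p ≤ 2 * V := by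
      rw [show v - -v = 2*v by ring]
      calc 2*v*(((4:ℝ)*v^2) ^ p) ≤ 2*v*(((v:ℝ)^2) ^ p) := by
            apply mul_le_mul_of_nonneg_left h4v'
            linarith
        _ = 2*(v * v ^ (2*p)) := by rw [hv2p]; ring
        _ = 2 * v ^ (2*p+1) := by rw [hvv]
        _ = 2*V := by rw [hVv]
    linarith
  -- piece D
  have hD : (∫ x in v..(60:ℝ), f x) ≤ 2 * V := by
    have hg4 : IntervalIntegrable (fun x : ℝ => ((x:ℝ)^2) ^ p) volume v 60 := by
      apply ContinuousOn.intervalIntegrable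
      apply ContinuousOn.rpow_const (by fun_prop)
      intro x hx
      rw [Set.uIcc_of_le (by linarith)] at hx
      have hxpos : 0 < x := lt_of_lt_of_le hv0 hx.1
      exact Or.inl (pow_ne_zero 2 hxpos.ne')
    have hmono : (∫ x in v..(60:ℝ), f x) ≤ ∫ x in v..(60:ℝ), ((x:ℝ)^2) ^ p := by
      apply intervalIntegral.integral_mono_on (by linarith) I4 hg4
      intro x hx
      obtain ⟨hx1, hx2⟩ := hx
      have hb := hbase x (by linarith)
      have hx2' : (0:ℝ) < x^2 := by nlinarith [mul_pos hv0 hv0]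
      have h1 : (x ^ 2 + 2 * (x + 4) * v ^ 2) ^ p ≤ (x^2) ^ p := by
        apply Real.rpow_le_rpow_of_nonpos hx2' _ hp0
        have h2' : 0 ≤ 2 * (x + 4) * v ^ 2 := by
          have : (0:ℝ) ≤ x + 4 := by linarith
          positivity
        linarith
      have h2 : (x + 4) ^ (-(1/2):ℝ) ≤ 1 :=
        Real.rpow_le_one_of_one_le_of_nonpos (by linarith) (by norm_num)
      calc f x ≤ (x^2) ^ p * 1 :=
            mul_le_mul h1 h2 (Real.rpow_nonneg (by linarith) _) (Real.rpow_nonneg hx2'.le _)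
        _ = (x^2) ^ p := mul_one _
    have htail := Jk_tail_bound p v 60 hp hv0 (by linarith)
    rw [hexp] at htail
    linarith
  rw [hsplit]
  linarith
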